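/- A linear order on the edge set of a finite acyclic directed graph is an upward planar order in the sense of conditions (U₁), (U₂), (U₃) if and only if it satisfies (Q₁) and the nesting condition (Q₂). -/
import Mathlib


structure Digraph' (V E : Type) where
  s : E → V
  t : E → V

def conv {E : Type} [LinearOrder E] (X : Set E) : Set E :=
  {y | ∃ a ∈ X, ∃ b ∈ X, a ≤ y ∧ y ≤ b}

namespace Digraph'

variable {V E : Type} (G : Digraph' V E)

/-- One edge can be followed by another. -/
def step (e f : E) : Prop := G.t e = G.s f

/-- The reachable order: a directed path starts with `e₁` and ends with `e₂`
(including the case `e₁ = e₂`). -/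
def reach : E → E → Prop := Relation.ReflTransGen G.step

/-- No directed cycles. -/
def Acyclic : Prop := ∀ e, ¬ Relation.TransGen G.step e e

/-- Incoming edges of a vertex. -/
def I (v : V) : Set E := {e | G.t e = v}

/-- Outgoing edges of a vertex. -/
def O (v : V) : Set E := {e | G.s e = v}

/-- All edges incident to a vertex `v` (incoming or outgoing). -/
def Ev (v : V) : Set E := G.I v ∪ G.O v

variable [LinearOrder E]

/-- (U₁): reachability implies order. -/
def U1 : Prop := ∀ e₁ e₂ : E, G.reach e₁ e₂ → e₁ ≤ e₂

/-- (U₂): for every vertex, the hulls of incoming and outgoing edges are disjoint and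
together give the hull of all incident edges. -/
def U2 : Prop := ∀ v : V,
  conv (G.I v) ∩ conv (G.O v) = ∅ ∧ conv (G.Ev v) = conv (G.I v) ∪ conv (G.O v)

/-- (U₃). -/
def U3 : Prop := ∀ v₁ v₂ : V,
  ((G.I v₁ ∩ conv (G.I v₂)).Nonempty → conv (G.I v₁) ⊆ conv (G.I v₂)) ∧
  ((G.O v₁ ∩ conv (G.O v₂)).Nonempty → conv (G.O v₁) ⊆ conv (G.O v₂))

/-- (Q₂), the nesting condition. -/
def Q2 : Prop := ∀ e₁ e e₂ : E, e₁ < e → e < e₂ →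
  (G.t e₁ = G.t e₂ → G.I (G.t e) ⊆ conv (G.I (G.t e₁))) ∧
  (G.s e₁ = G.s e₂ → G.O (G.s e) ⊆ conv (G.O (G.s e₁))) ∧
  (G.t e₁ = G.s e₂ →
    G.I (G.t e) ⊆ conv (G.I (G.t e₁)) ∨ G.O (G.s e) ⊆ conv (G.O (G.s e₂)))

end Digraph'

lemma mem_conv_self {E : Type} [LinearOrder E] {X : Set E} {x : E} (hx : x ∈ X) :
    x ∈ conv X := ⟨x, hx, x, hx, le_rfl, le_rfl⟩

lemma conv_subset_conv {E : Type} [LinearOrder E] {X Y : Set E} (h : X ⊆ conv Y) :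
    conv X ⊆ conv Y := by
  rintro x ⟨a, ha, b, hb, hax, hxb⟩
  obtain ⟨a', ha', _, _, ha'a, _⟩ := h ha
  obtain ⟨_, _, b', hb', _, hbb'⟩ := h hb
  exact ⟨a', ha', b', hb', ha'a.trans hax, hxb.trans hbb'⟩

lemma conv_mono {E : Type} [LinearOrder E] {X Y : Set E} (h : X ⊆ Y) :
    conv X ⊆ conv Y :=
  conv_subset_conv (fun x hx => mem_conv_self (h hx))

open Digraph' in
/-- A linear order on the edges of a finite acyclic directed graph satisfies
(U₁), (U₂), (U₃) iff it satisfies (Q₁) = (U₁) and the nesting condition (Q₂). -/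
theorem U_iff_Q {V E : Type} [Fintype V] [Fintype E] [LinearOrder E]
    (G : Digraph' V E) (hG : G.Acyclic) :
    (G.U1 ∧ G.U2 ∧ G.U3) ↔ (G.U1 ∧ G.Q2) := by
  constructor
  · rintro ⟨h1, h2, h3⟩
    refine ⟨h1, fun e₁ e e₂ h1e h2e => ?_⟩
    refine ⟨fun htt => ?_, fun hss => ?_, fun hts => ?_⟩
    · -- t e₁ = t e₂
      have he : e ∈ conv (G.I (G.t e₁)) :=
        ⟨e₁, rfl, e₂, htt.symm, h1e.le, h2e.le⟩
      have hne : (G.I (G.t e) ∩ conv (G.I (G.t e₁))).Nonempty := ⟨e, rfl, he⟩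
      exact fun x hx => (h3 (G.t e) (G.t e₁)).1 hne (mem_conv_self hx)
    · have he : e ∈ conv (G.O (G.s e₁)) :=
        ⟨e₁, rfl, e₂, hss.symm, h1e.le, h2e.le⟩
      have hne : (G.O (G.s e) ∩ conv (G.O (G.s e₁))).Nonempty := ⟨e, rfl, he⟩
      exact fun x hx => (h3 (G.s e) (G.s e₁)).2 hne (mem_conv_self hx)
    · -- t e₁ = s e₂
      have he : e ∈ conv (G.Ev (G.t e₁)) :=
        ⟨e₁, Or.inl rfl, e₂, Or.inr hts.symm, h1e.le, h2e.le⟩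
      rw [(h2 (G.t e₁)).2] at he
      rcases he with he | he
      · left
        have hne : (G.I (G.t e) ∩ conv (G.I (G.t e₁))).Nonempty := ⟨e, rfl, he⟩
        exact fun x hx => (h3 (G.t e) (G.t e₁)).1 hne (mem_conv_self hx)
      · right
        have hne : (G.O (G.s e) ∩ conv (G.O (G.s e₂))).Nonempty :=
          ⟨e, rfl, by rwa [← hts]⟩
        exact fun x hx => (h3 (G.s e) (G.s e₂)).2 hne (mem_conv_self hx)
  · rintro ⟨h1, hq⟩
    refine ⟨h1, fun v => ⟨?_, ?_⟩, fun v₁ v₂ => ⟨?_, ?_⟩⟩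
    · -- disjointness
      ext x
      simp only [Set.mem_inter_iff, Set.mem_empty_iff_false, iff_false]
      rintro ⟨⟨a, ha, b, hb, hax, hxb⟩, ⟨c, hc, d, hd, hcx, hxd⟩⟩
      have hbc : b ≤ c := h1 b c (Relation.ReflTransGen.single (hb.trans hc.symm))
      have hbe : b = c := le_antisymm hbc ((hcx.trans hxb))
      exact hG b (Relation.TransGen.single (hb.trans (hbe ▸ hc).symm))
    · -- conv Ev = conv I ∪ conv O
      apply Set.Subset.antisymm
      · rintro x ⟨a, ha, b, hb, hax, hxb⟩
        rcases ha with ha | ha <;> rcases hb with hb | hb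
        · exact Or.inl ⟨a, ha, b, hb, hax, hxb⟩
        · -- a ∈ I v, b ∈ O v
          rcases eq_or_lt_of_le hax with rfl | hax'
          · exact Or.inl (mem_conv_self ha)
          rcases eq_or_lt_of_le hxb with rfl | hxb'
          · exact Or.inr (mem_conv_self hb)
          rcases (hq a x b hax' hxb').2.2 (ha.trans hb.symm) with h | h
          · exact Or.inl (by have := h (show x ∈ G.I (G.t x) from rfl); rwa [ha] at this)
          · exact Or.inr (by have := h (show x ∈ G.O (G.s x) from rfl); rwa [hb] at this)
        · -- a ∈ O v, b ∈ I v : contradiction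
          have hba : b ≤ a := h1 b a (Relation.ReflTransGen.single (hb.trans ha.symm))
          have : a = b := le_antisymm (hax.trans hxb) hba
          exact absurd (Relation.TransGen.single (show G.step b b from hb.trans (this ▸ ha).symm)) (hG b)
        · exact Or.inr ⟨a, ha, b, hb, hax, hxb⟩
      · rintro x (hx | hx)
        · exact conv_mono (Set.subset_union_left) hx
        · exact conv_mono (Set.subset_union_right) hx
    · -- U3, incoming part
      rintro ⟨e, he, a, ha, b, hb, hae, heb⟩
      rcases eq_or_lt_of_le hae with rfl | hae'
      · have : v₂ = v₁ := ha ▸ he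
        subst this; exact le_refl _
      rcases eq_or_lt_of_le heb with rfl | heb'
      · have : v₂ = v₁ := hb ▸ he
        subst this; exact le_refl _
      have := (hq a e b hae' heb').1 (ha.trans hb.symm)
      rw [he, ha] at this
      exact conv_subset_conv this
    · -- U3, outgoing part
      rintro ⟨e, he, a, ha, b, hb, hae, heb⟩
      rcases eq_or_lt_of_le hae with rfl | hae'
      · have : v₂ = v₁ := ha ▸ he
        subst this; exact le_refl _
      rcases eq_or_lt_of_le heb with rfl | heb'
      · have : v₂ = v₁ := hb ▸ he
        subst this; exact le_refl _
      have := (hq a e b hae' heb').2.1 (ha.trans hb.symm)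
      rw [he, ha] at this
      exact conv_subset_conv this
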